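/- Half-bit gap for the degraded two-way relay channel: for all P₁, P₂, P_R, N_R, N₂′ > 0 and every α₁ ∈ [0,1], min( max( (1/2)log₂(2P₁/(P₁+P₂) + 2P₁/N_R), 1/2 ), (1/2)log₂(2 + 2(P₁+P_R)/(N₂′+N_R)) ) ≥ min( (1/2)log₂(1 + α₁P₁/N_R), (1/2)log₂(1 + (P₁ + P_R + 2√((1-α₁)P₁P_R))/(N₂′+N_R)) ). Equivalently, the achievable rate max(0, ...) plus 1/2 exceeds the cut-set bound R_{OD1}. -/

import Mathlib

/-- Half-bit gap for the degraded two-way relay channel: the achievable rate of the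
lattice scheme shifted by 1/2 bit dominates the cut-set bound term for every power
split `α₁ ∈ [0,1]`. -/
theorem half_bit_gap_two_way_relay
    (P₁ P₂ PR NR N₂' : ℝ) (hP₁ : 0 < P₁) (hP₂ : 0 < P₂) (hPR : 0 < PR)
    (hNR : 0 < NR) (hN₂' : 0 < N₂')
    (α₁ : ℝ) (hα₁ : α₁ ∈ Set.Icc (0 : ℝ) 1) :
    min (max ((1 / 2) * Real.logb 2 (2 * P₁ / (P₁ + P₂) + 2 * P₁ / NR)) (1 / 2))
        ((1 / 2) * Real.logb 2 (2 + 2 * (P₁ + PR) / (N₂' + NR)))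
      ≥ min ((1 / 2) * Real.logb 2 (1 + α₁ * P₁ / NR))
          ((1 / 2) * Real.logb 2
            (1 + (P₁ + PR + 2 * Real.sqrt ((1 - α₁) * P₁ * PR)) / (N₂' + NR))) := by
  obtain ⟨hα0, hα1⟩ := hα₁
  have hb : (1 : ℝ) < 2 := one_lt_two
  have hN : (0 : ℝ) < N₂' + NR := by linarith
  have hCpos : (0 : ℝ) < 1 + α₁ * P₁ / NR := by positivity
  -- sqrt bounds
  have hs0 : Real.sqrt ((1 - α₁) * P₁ * PR) ≤ Real.sqrt (P₁ * PR) := by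
    apply Real.sqrt_le_sqrt
    nlinarith [mul_nonneg (mul_nonneg hα0 hP₁.le) hPR.le]
  have hs1 : 2 * Real.sqrt (P₁ * PR) ≤ P₁ + PR := by
    have h1 : Real.sqrt (P₁ * PR) ^ 2 = P₁ * PR := Real.sq_sqrt (by positivity)
    nlinarith [Real.sqrt_nonneg (P₁ * PR), sq_nonneg (P₁ - PR)]
  have hsnn : 0 ≤ Real.sqrt ((1 - α₁) * P₁ * PR) := Real.sqrt_nonneg _
  -- second component: B ≥ D
  have hBD : (1 / 2) * Real.logb 2 (2 + 2 * (P₁ + PR) / (N₂' + NR))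
      ≥ (1 / 2) * Real.logb 2
          (1 + (P₁ + PR + 2 * Real.sqrt ((1 - α₁) * P₁ * PR)) / (N₂' + NR)) := by
    have harg : 1 + (P₁ + PR + 2 * Real.sqrt ((1 - α₁) * P₁ * PR)) / (N₂' + NR)
        ≤ 2 + 2 * (P₁ + PR) / (N₂' + NR) := by
      have hnum : P₁ + PR + 2 * Real.sqrt ((1 - α₁) * P₁ * PR) ≤ 2 * (P₁ + PR) := by
        nlinarith [mul_nonneg (mul_nonneg (sub_nonneg.mpr hα1) hP₁.le) hNR.le]
      linarith [div_le_div_of_nonneg_right hnum (le_of_lt hN)]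
    have hpos : (0 : ℝ) < 1 + (P₁ + PR + 2 * Real.sqrt ((1 - α₁) * P₁ * PR)) / (N₂' + NR) := by
      positivity
    exact mul_le_mul_of_nonneg_left (Real.logb_le_logb_of_le hb hpos harg) (by norm_num)
  refine le_min ?_ (le_trans (min_le_right _ _) hBD)
  -- first component
  by_cases hc : α₁ * P₁ / NR ≤ 1
  · refine le_trans (min_le_left _ _) (le_trans ?_ (le_max_right _ _))
    have : Real.logb 2 (1 + α₁ * P₁ / NR) ≤ Real.logb 2 2 :=
      Real.logb_le_logb_of_le hb hCpos (by linarith)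
    rw [Real.logb_self_eq_one hb] at this
    linarith
  · push_neg at hc
    refine le_trans (min_le_left _ _) (le_trans ?_ (le_max_left _ _))
    have hA : 1 + α₁ * P₁ / NR ≤ 2 * P₁ / (P₁ + P₂) + 2 * P₁ / NR := by
      have h1 : (0:ℝ) < 2 * P₁ / (P₁ + P₂) := by positivity
      have h2 : α₁ * P₁ / NR + α₁ * P₁ / NR ≤ 2 * P₁ / NR := by
        rw [← add_div, div_le_div_iff₀ (by linarith) (by linarith)]
        nlinarith [mul_nonneg (mul_nonneg (sub_nonneg.mpr hα1) hP₁.le) hNR.le]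
      linarith
    exact mul_le_mul_of_nonneg_left (Real.logb_le_logb_of_le hb hCpos hA) (by norm_num)
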